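/- Let F be a field, let n ≥ 1, let x ∈ F with x ≠ 1 and x ≠ -1, let y ∈ F, and set z = y·x/(x² - 1). Then P₁(-z) · Q(y,x) · P₁(z) = D(x²); that is, conjugating the Zhang–Liu matrix by P₁(z) diagonalizes it with diagonal entries (x²)^{i-1}. -/

import Mathlib

open Matrix Finset

/-- Generalized Pascal matrix of the first kind: with 1-based indexing the (i,j) entry is
`y^(j-i) * binom(j-1, i-1)` for `j ≥ i` and `0` otherwise. Here indices are 0-based. -/
def pascal1 {R : Type*} [CommRing R] (n : ℕ) (y : R) : Matrix (Fin n) (Fin n) R :=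
  Matrix.of fun i j => if i ≤ j then y ^ (j.val - i.val) * (Nat.choose j.val i.val : R) else 0

/-- Zhang–Liu matrix: with 1-based indexing the (i,j) entry is
`y^(j-i) * x^(i+j-2) * binom(j-1, i-1)` for `j ≥ i` and `0` otherwise. Indices 0-based here. -/
def zhangLiu {R : Type*} [CommRing R] (n : ℕ) (y x : R) : Matrix (Fin n) (Fin n) R :=
  Matrix.of fun i j =>
    if i ≤ j then y ^ (j.val - i.val) * x ^ (i.val + j.val) * (Nat.choose j.val i.val : R) else 0

/-- `D(α)` : the diagonal matrix with (i,i) entry `α^(i-1)` (1-based), i.e. `α^i` 0-based. -/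
def diagD {R : Type*} [CommRing R] (n : ℕ) (α : R) : Matrix (Fin n) (Fin n) R :=
  Matrix.diagonal fun i : Fin n => α ^ i.val

lemma key_sum {R : Type*} [CommRing R] (a b : R) {i k : ℕ} (h : i ≤ k) :
    ∑ j ∈ Finset.Icc i k,
        (a ^ (j - i) * (Nat.choose j i : R)) * (b ^ (k - j) * (Nat.choose k j : R)) =
      (a + b) ^ (k - i) * (Nat.choose k i : R) := by
  rw [← Finset.Ico_add_one_right_eq_Icc, Finset.sum_Ico_eq_sum_range]
  have hrange : k + 1 - i = (k - i) + 1 := by omega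
  rw [hrange, add_pow, Finset.sum_mul]
  apply Finset.sum_congr rfl
  intro m hm
  rw [Finset.mem_range] at hm
  have h1 : i + m - i = m := by omega
  have h2 : k - (i + m) = k - i - m := by omega
  have h3 : (Nat.choose (i + m) i : R) * (Nat.choose k (i + m) : R) =
      (Nat.choose k i : R) * (Nat.choose (k - i) m : R) := by
    rw [← Nat.cast_mul, ← Nat.cast_mul, mul_comm ((i+m).choose i),
      Nat.choose_mul (n := k) (by omega : i ≤ i + m), h1]
  rw [h1, h2]
  calc a ^ m * (Nat.choose (i+m) i : R) * (b ^ (k - i - m) * (Nat.choose k (i+m) : R))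
      = ((Nat.choose (i+m) i : R) * (Nat.choose k (i+m) : R)) * (a ^ m * b ^ (k - i - m)) := by
        ring
    _ = ((Nat.choose k i : R) * (Nat.choose (k-i) m : R)) * (a ^ m * b ^ (k - i - m)) := by
        rw [h3]
    _ = a ^ m * b ^ (k - i - m) * (Nat.choose (k-i) m : R) * (Nat.choose k i : R) := by ring

lemma pascal1_mul {R : Type*} [CommRing R] (n : ℕ) (a b : R) :
    pascal1 n a * pascal1 n b = pascal1 n (a + b) := by
  ext i k
  rw [Matrix.mul_apply]
  have step : ∀ j : Fin n,
      (pascal1 n a) i j * (pascal1 n b) j k =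
        if j ∈ Finset.Icc i k then
          (a ^ (j.val - i.val) * (Nat.choose j.val i.val : R)) *
            (b ^ (k.val - j.val) * (Nat.choose k.val j.val : R)) else 0 := by
    intro j
    by_cases h1 : i ≤ j <;> by_cases h2 : j ≤ k <;>
      simp [pascal1, Finset.mem_Icc, h1, h2]
  rw [Finset.sum_congr rfl fun j _ => step j, Finset.sum_ite_mem, Finset.univ_inter]
  have hmap : ∑ j ∈ Finset.Icc i k,
      (a ^ (j.val - i.val) * (Nat.choose j.val i.val : R)) *
        (b ^ (k.val - j.val) * (Nat.choose k.val j.val : R)) =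
      ∑ m ∈ Finset.Icc i.val k.val,
      (a ^ (m - i.val) * (Nat.choose m i.val : R)) *
        (b ^ (k.val - m) * (Nat.choose k.val m : R)) := by
    rw [← Fin.map_valEmbedding_Icc, Finset.sum_map]
    rfl
  rw [hmap]
  by_cases h : i ≤ k
  · rw [key_sum a b (show i.val ≤ k.val from h)]
    simp [pascal1, h]
  · rw [Finset.Icc_eq_empty (by exact_mod_cast fun hc => h (by exact_mod_cast hc))]
    simp [pascal1, h]

lemma pascal1_zero {R : Type*} [CommRing R] (n : ℕ) : pascal1 n (0 : R) = 1 := by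
  ext i j
  by_cases h : i = j
  · subst h; simp [pascal1]
  · rw [Matrix.one_apply_ne h]
    by_cases h2 : i ≤ j
    · have hlt : i.val < j.val := Fin.lt_def.mp (lt_of_le_of_ne h2 h)
      simp [pascal1, h2, zero_pow (by omega : j.val - i.val ≠ 0)]
    · simp [pascal1, h2]

lemma pascal1_mul_diagD {R : Type*} [CommRing R] (n : ℕ) (a α : R) :
    pascal1 n a * diagD n α = diagD n α * pascal1 n (a * α) := by
  ext i j
  rw [diagD, Matrix.mul_diagonal, Matrix.diagonal_mul]
  by_cases h : i ≤ j
  · have hα : α ^ i.val * α ^ (j.val - i.val) = α ^ j.val := by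
      rw [← pow_add]; congr 1; omega
    simp only [pascal1, Matrix.of_apply, if_pos h, mul_pow]
    rw [← hα]; ring
  · simp [pascal1, h]

lemma zhangLiu_eq {R : Type*} [CommRing R] (n : ℕ) (y x : R) :
    zhangLiu n y x = diagD n x * pascal1 n y * diagD n x := by
  ext i j
  rw [diagD, Matrix.mul_diagonal, Matrix.diagonal_mul]
  by_cases h : i ≤ j
  · simp only [zhangLiu, pascal1, Matrix.of_apply, if_pos h, pow_add]
    ring
  · simp [zhangLiu, pascal1, h]

lemma diagD_sq {R : Type*} [CommRing R] (n : ℕ) (α : R) :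
    diagD n α * diagD n α = diagD n (α ^ 2) := by
  unfold diagD
  rw [Matrix.diagonal_mul_diagonal]
  have : (fun i : Fin n => α ^ i.val * α ^ i.val) = fun i : Fin n => (α ^ 2) ^ i.val := by
    funext i; rw [← pow_add, ← pow_mul, two_mul]
  rw [this]

theorem zhangLiu_conjugation {F : Type*} [Field F] (n : ℕ) (hn : 1 ≤ n)
    (x y : F) (hx1 : x ≠ 1) (hx2 : x ≠ -1) (z : F) (hz : z = y * x / (x ^ 2 - 1)) :
    pascal1 n (-z) * zhangLiu n y x * pascal1 n z = diagD n (x ^ 2) := by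
  have hne : x ^ 2 - 1 ≠ 0 := by
    intro hc
    have : (x - 1) * (x + 1) = 0 := by linear_combination hc
    rcases mul_eq_zero.mp this with h | h
    · exact hx1 (sub_eq_zero.mp h)
    · exact hx2 (eq_neg_of_add_eq_zero_left h)
  have hz' : z * (x ^ 2 - 1) = y * x := by
    rw [hz, div_mul_cancel₀ _ hne]
  have hkey : (y + -z * x) * x + z = 0 := by linear_combination -hz'
  rw [zhangLiu_eq]
  calc pascal1 n (-z) * (diagD n x * pascal1 n y * diagD n x) * pascal1 n z
      = (pascal1 n (-z) * diagD n x) * pascal1 n y * (diagD n x * pascal1 n z) := by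
        noncomm_ring
    _ = (diagD n x * pascal1 n (-z * x)) * pascal1 n y * (diagD n x * pascal1 n z) := by
        rw [pascal1_mul_diagD]
    _ = diagD n x * (pascal1 n (-z * x) * pascal1 n y) * (diagD n x * pascal1 n z) := by
        noncomm_ring
    _ = diagD n x * pascal1 n (-z * x + y) * (diagD n x * pascal1 n z) := by
        rw [pascal1_mul]
    _ = diagD n x * (pascal1 n (-z * x + y) * diagD n x * pascal1 n z) := by
        noncomm_ring
    _ = diagD n x * (diagD n x * pascal1 n ((-z * x + y) * x) * pascal1 n z) := by
        rw [pascal1_mul_diagD]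
    _ = (diagD n x * diagD n x) * (pascal1 n ((-z * x + y) * x) * pascal1 n z) := by
        noncomm_ring
    _ = diagD n (x ^ 2) * pascal1 n ((-z * x + y) * x + z) := by
        rw [diagD_sq, pascal1_mul]
    _ = diagD n (x ^ 2) := by
        rw [show (-z * x + y) * x + z = 0 by linear_combination hkey, pascal1_zero, mul_one]
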